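/- Let K ⊂ ℝ^d be nonempty compact and let ψ be a feedforward neural network with depth L ∈ ℕ, widths w_i ∈ ℕ, and continuous activation functions σ_i. Suppose σ_j is constant on some nonempty open interval I_j ⊂ ℝ for some j ∈ {1,…,L}, and suppose L: C(K) × C(K) → ℝ and y_T ∈ C(K) are such that the problem of minimizing L(z_c, y_T) over c ∈ ℝ, where z_c(x) = c, has a global solution. Then there exists a set E ⊂ D with Hausdorff dimension dim_H(E) ≥ m − 1 such that every element of E is a local minimum of the training problem (P) and L(Ψ(α), y_T) = min_{c ∈ ℝ} L(z_c, y_T) holds for all α ∈ E. -/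

import Mathlib

open scoped BigOperators ENNReal NNReal

/-- Parameter space `D` of a feedforward network with `L` hidden layers and width
function `w` (`w 0 = d` is the input dimension, hidden layer `i` has width `w i` for
`i = 1, …, L`, and the output layer has width one). The component for `i : Fin L`
consists of the weight matrix `A_{i+1}` and the bias vector `b_{i+1}`; the last
component consists of the output weights `A_{L+1}` and the output bias `b_{L+1}`. -/
abbrev Params (w : ℕ → ℕ) (L : ℕ) : Type :=
  (∀ i : Fin L, ((Fin (w (i + 1)) → Fin (w i) → ℝ) × (Fin (w (i + 1)) → ℝ))) ×
    ((Fin (w L) → ℝ) × ℝ)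

/-- The number of degrees of freedom `m = Σ_{i=1}^{L+1} w_i (w_{i-1} + 1)` of the
network (with `w_{L+1} = 1`). -/
def mdim (w : ℕ → ℕ) (L : ℕ) : ℕ :=
  (∑ i ∈ Finset.range L, w (i + 1) * (w i + 1)) + (w L + 1)

/-- Output of the first `k` hidden layers of the network. -/
noncomputable def hiddenOut (σ : ℕ → ℝ → ℝ) (w : ℕ → ℕ) (L : ℕ)
    (θ : ∀ i : Fin L, ((Fin (w (i + 1)) → Fin (w i) → ℝ) × (Fin (w (i + 1)) → ℝ))) :
    ∀ k : ℕ, k ≤ L → (Fin (w 0) → ℝ) → Fin (w k) → ℝ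
  | 0, _, x => x
  | k + 1, h, x => fun i =>
      σ (k + 1)
        ((∑ j, (θ ⟨k, h⟩).1 i j * hiddenOut σ w L θ k (Nat.le_of_succ_le h) x j) +
          (θ ⟨k, h⟩).2 i)

/-- The scalar output `ψ(α, x)` of the feedforward network. -/
noncomputable def netFun (σ : ℕ → ℝ → ℝ) (w : ℕ → ℕ) (L : ℕ) (α : Params w L)
    (x : Fin (w 0) → ℝ) : ℝ :=
  (∑ j, α.2.1 j * hiddenOut σ w L α.1 L le_rfl x j) + α.2.2

lemma continuous_hiddenOut {σ : ℕ → ℝ → ℝ} {w : ℕ → ℕ} {L : ℕ}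
    (hσ : ∀ i, 1 ≤ i → i ≤ L → Continuous (σ i))
    (θ : ∀ i : Fin L, ((Fin (w (i + 1)) → Fin (w i) → ℝ) × (Fin (w (i + 1)) → ℝ))) :
    ∀ (k : ℕ) (h : k ≤ L), Continuous fun x => hiddenOut σ w L θ k h x := by
  intro k
  induction k with
  | zero =>
      intro h
      first
        | exact (continuous_id : Continuous fun x : Fin (w 0) → ℝ => x)
        | (simp only [hiddenOut]; exact continuous_id)
  | succ k ih =>
      intro h
      apply continuous_pi
      intro i
      simp only [hiddenOut]
      exact (hσ (k + 1) (Nat.succ_le_succ (Nat.zero_le _)) h).comp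
        ((continuous_finset_sum _ fun j _ =>
          continuous_const.mul ((continuous_apply j).comp (ih (Nat.le_of_succ_le h)))).add
          continuous_const)

lemma continuous_netFun {σ : ℕ → ℝ → ℝ} {w : ℕ → ℕ} {L : ℕ}
    (hσ : ∀ i, 1 ≤ i → i ≤ L → Continuous (σ i)) (α : Params w L) :
    Continuous fun x => netFun σ w L α x := by
  unfold netFun
  exact (continuous_finset_sum _ fun j _ =>
    continuous_const.mul
      ((continuous_apply j).comp (continuous_hiddenOut hσ α.1 L le_rfl))).add continuous_const

/-- The parameter-to-realization map `Ψ : D → C(K)`. -/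
noncomputable def Psi (σ : ℕ → ℝ → ℝ) (w : ℕ → ℕ) (L : ℕ)
    (hσ : ∀ i, 1 ≤ i → i ≤ L → Continuous (σ i)) (K : Set (Fin (w 0) → ℝ))
    (α : Params w L) : C(K, ℝ) :=
  ⟨fun x => netFun σ w L α x, (continuous_netFun hσ α).comp continuous_subtype_val⟩

/-- The affine function `z_{a,c} : x ↦ aᵀ x + c` as an element of `C(K)`. -/
noncomputable def affineCM {n : ℕ} (K : Set (Fin n → ℝ)) (a : Fin n → ℝ) (c : ℝ) :
    C(K, ℝ) :=
  ⟨fun x => (∑ j, a j * (x : Fin n → ℝ) j) + c,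
    (continuous_finset_sum _ fun j _ =>
      continuous_const.mul ((continuous_apply j).comp continuous_subtype_val)).add
      continuous_const⟩

/-- The constant function `z_c : x ↦ c` as an element of `C(K)`. -/
noncomputable def constCM {n : ℕ} (K : Set (Fin n → ℝ)) (c : ℝ) : C(K, ℝ) :=
  ⟨fun _ => c, continuous_const⟩

/-- A function `ℝ → ℝ` is nonpolynomial if it is not the restriction of a polynomial. -/
def IsNonpolynomial (σ : ℝ → ℝ) : Prop :=
  ¬ ∃ p : Polynomial ℝ, ∀ x : ℝ, σ x = p.eval x

/-- `𝓛` is Gâteaux differentiable in its first argument at `(v, y)` with partial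
derivative (identified with an element of `M(K) = C(K)*`) given by the continuous
linear functional `T`. -/
def HasGateauxDerivFirst {n : ℕ} {K : Set (Fin n → ℝ)}
    (𝓛 : C(K, ℝ) → C(K, ℝ) → ℝ) (v y : C(K, ℝ)) (T : C(K, ℝ) →L[ℝ] ℝ) : Prop :=
  ∀ h : C(K, ℝ), Filter.Tendsto (fun s : ℝ => (𝓛 (v + s • h) y - 𝓛 v y) / s)
    (nhdsWithin 0 (Set.Ioi 0)) (nhds (T h))

section AuxNN

variable {σ : ℕ → ℝ → ℝ} {w : ℕ → ℕ} {L : ℕ}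

lemma continuous_hiddenOut_param (hσ : ∀ i, 1 ≤ i → i ≤ L → Continuous (σ i)) :
    ∀ (k : ℕ) (h : k ≤ L),
      Continuous fun q :
          (∀ i : Fin L, ((Fin (w (i + 1)) → Fin (w i) → ℝ) × (Fin (w (i + 1)) → ℝ))) ×
            (Fin (w 0) → ℝ) =>
        hiddenOut σ w L q.1 k h q.2 := by
  intro k
  induction k with
  | zero =>
      intro h
      simpa [hiddenOut] using
        (continuous_snd : Continuous fun q :
          (∀ i : Fin L, ((Fin (w (i + 1)) → Fin (w i) → ℝ) × (Fin (w (i + 1)) → ℝ))) ×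
            (Fin (w 0) → ℝ) => q.2)
  | succ k ih =>
      intro h
      apply continuous_pi
      intro i
      simp only [hiddenOut]
      refine (hσ (k + 1) (Nat.succ_le_succ (Nat.zero_le _)) h).comp (Continuous.add ?_ ?_)
      · refine continuous_finset_sum _ fun j _ => Continuous.mul ?_ ?_
        · exact (continuous_apply j).comp ((continuous_apply i).comp
            (continuous_fst.comp ((continuous_apply (⟨k, h⟩ : Fin L)).comp continuous_fst)))
        · exact (continuous_apply j).comp (ih (Nat.le_of_succ_le h))
      · exact (continuous_apply i).comp
          (continuous_snd.comp ((continuous_apply (⟨k, h⟩ : Fin L)).comp continuous_fst))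

lemma hiddenOut_eq_of_eq
    (θ : ∀ i : Fin L, ((Fin (w (i + 1)) → Fin (w i) → ℝ) × (Fin (w (i + 1)) → ℝ)))
    {x x' : Fin (w 0) → ℝ} {j : ℕ} (hjL : j ≤ L)
    (hbase : hiddenOut σ w L θ j hjL x = hiddenOut σ w L θ j hjL x') :
    ∀ k, j ≤ k → ∀ hk : k ≤ L,
      hiddenOut σ w L θ k hk x = hiddenOut σ w L θ k hk x' := by
  intro k hjk
  induction k, hjk using Nat.le_induction with
  | base => intro hk; exact hbase
  | succ k hjk ih =>
      intro hk
      funext i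
      simp only [hiddenOut]
      rw [ih (Nat.le_of_succ_le hk)]

lemma netFun_bias
    (θ : ∀ i : Fin L, ((Fin (w (i + 1)) → Fin (w i) → ℝ) × (Fin (w (i + 1)) → ℝ)))
    (a : Fin (w L) → ℝ) (b : ℝ) (x : Fin (w 0) → ℝ) :
    netFun σ w L (θ, (a, b)) x = netFun σ w L (θ, (a, 0)) x + b := by
  simp [netFun]

end AuxNN

set_option maxHeartbeats 2000000 in
/-- **Lemma 4.5.** If some activation function `σ_j` is constant on a nonempty open
interval and a constant best approximation of `y_T` with respect to `𝓛` exists, then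
there is a set `E ⊆ D` of Hausdorff dimension at least `m - 1` all of whose elements
are local minima of the training problem (P) with loss value equal to
`min_c 𝓛(z_c, y_T)`. -/
theorem local_minima_from_constant_segments
    (w : ℕ → ℕ) (L : ℕ) (hL : 0 < L) (hw0 : 0 < w 0) (hw : ∀ i, 1 ≤ i → i ≤ L → 0 < w i)
    (σ : ℕ → ℝ → ℝ)
    (hσ : ∀ i, 1 ≤ i → i ≤ L → Continuous (σ i))
    (K : Set (Fin (w 0) → ℝ)) (hKne : K.Nonempty) (hKc : IsCompact K)
    (𝓛 : C(K, ℝ) → C(K, ℝ) → ℝ) (yT : C(K, ℝ))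
    -- some activation function is constant on a nonempty open interval
    (hconst : ∃ j, 1 ≤ j ∧ j ≤ L ∧ ∃ s t γ : ℝ, s < t ∧
      ∀ x ∈ Set.Ioo s t, σ j x = γ)
    -- existence of a constant best approximation
    (hmin : ∃ c₀ : ℝ, ∀ c : ℝ, 𝓛 (constCM K c₀) yT ≤ 𝓛 (constCM K c) yT) :
    ∃ E : Set (Params w L),
      (↑(mdim w L - 1) : ℝ≥0∞) ≤ dimH E ∧
      ∀ α ∈ E,
        -- `α` is a local minimum of (P)
        (∃ r > (0 : ℝ), ∀ β ∈ Metric.ball α r,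
          𝓛 (Psi σ w L hσ K α) yT ≤ 𝓛 (Psi σ w L hσ K β) yT) ∧
        -- the loss value at `α` equals `min_c 𝓛(z_c, y_T)`
        ((∀ c : ℝ, 𝓛 (Psi σ w L hσ K α) yT ≤ 𝓛 (constCM K c) yT) ∧
          ∃ c : ℝ, 𝓛 (Psi σ w L hσ K α) yT = 𝓛 (constCM K c) yT) := by
  classical
  obtain ⟨j, hj1, hjL, s, t, γ, hst, hγ⟩ := hconst
  obtain ⟨c₀, hc₀⟩ := hmin
  obtain ⟨x₀, hx₀K⟩ := hKne
  obtain ⟨jj, rfl⟩ : ∃ jj, j = jj + 1 := ⟨j - 1, (Nat.succ_pred_eq_of_pos hj1).symm⟩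
  have hjjL : jj < L := hjL
  set mid : ℝ := (s + t) / 2 with hmid_def
  have hmid : mid ∈ Set.Ioo s t := ⟨by simp only [hmid_def]; linarith, by simp only [hmid_def]; linarith⟩
  -- preactivation of layer `jj+1`
  set preact : ((∀ i : Fin L, ((Fin (w (i + 1)) → Fin (w i) → ℝ) × (Fin (w (i + 1)) → ℝ))) ×
      (Fin (w 0) → ℝ)) → Fin (w (jj + 1)) → ℝ :=
    fun q i =>
      (∑ k, (q.1 ⟨jj, hjjL⟩).1 i k *
          hiddenOut σ w L q.1 jj (Nat.le_of_succ_le hjL) q.2 k) +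
        (q.1 ⟨jj, hjjL⟩).2 i with hpreact_def
  have hpre_cont : ∀ i, Continuous fun q => preact q i := by
    intro i
    refine Continuous.add ?_ ?_
    · refine continuous_finset_sum _ fun k _ => Continuous.mul ?_ ?_
      · exact (continuous_apply k).comp ((continuous_apply i).comp
          (continuous_fst.comp ((continuous_apply (⟨jj, hjjL⟩ : Fin L)).comp continuous_fst)))
      · exact (continuous_apply k).comp
          (continuous_hiddenOut_param hσ jj (Nat.le_of_succ_le hjL))
    · exact (continuous_apply i).comp
        (continuous_snd.comp ((continuous_apply (⟨jj, hjjL⟩ : Fin L)).comp continuous_fst))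
  -- the predicate: preactivation in (s,t) on all of K
  set Pred : (∀ i : Fin L, ((Fin (w (i + 1)) → Fin (w i) → ℝ) × (Fin (w (i + 1)) → ℝ))) → Prop :=
    fun θ => ∀ x ∈ K, ∀ i, preact (θ, x) i ∈ Set.Ioo s t with hPred_def
  -- Pred implies the output of layer jj+1 is the constant γ
  have hlayer : ∀ θ, Pred θ → ∀ x ∈ K,
      hiddenOut σ w L θ (jj + 1) hjL x = fun _ => γ := by
    intro θ hθ x hx
    funext i
    simp only [hiddenOut]
    exact hγ _ (hθ x hx i)
  -- Pred implies the network is constant on K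
  have hnet_const : ∀ α : Params w L, Pred α.1 → ∀ x ∈ K,
      netFun σ w L α x = netFun σ w L α x₀ := by
    intro α hα x hx
    have hb : hiddenOut σ w L α.1 (jj + 1) hjL x = hiddenOut σ w L α.1 (jj + 1) hjL x₀ := by
      rw [hlayer α.1 hα x hx, hlayer α.1 hα x₀ hx₀K]
    have := hiddenOut_eq_of_eq α.1 hjL hb L hjL le_rfl
    simp only [netFun, this]
  -- Pred implies Psi α is constant
  have hPsi_const : ∀ α : Params w L, Pred α.1 →
      Psi σ w L hσ K α = constCM K (netFun σ w L α x₀) := by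
    intro α hα
    apply ContinuousMap.ext
    intro x
    exact hnet_const α hα x x.2
  -- the set where the preactivation lies in (s,t) is open
  set S : Set ((∀ i : Fin L, ((Fin (w (i + 1)) → Fin (w i) → ℝ) × (Fin (w (i + 1)) → ℝ))) ×
      (Fin (w 0) → ℝ)) := {q | ∀ i, preact q i ∈ Set.Ioo s t} with hS_def
  have hSopen : IsOpen S := by
    have : S = ⋂ i, (fun q => preact q i) ⁻¹' Set.Ioo s t := by
      ext q; simp [hS_def, Set.mem_iInter]
    rw [this]
    exact isOpen_iInter_of_finite fun i => isOpen_Ioo.preimage (hpre_cont i)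
  -- the base point θ₀
  set θ₀ : ∀ i : Fin L, ((Fin (w (i + 1)) → Fin (w i) → ℝ) × (Fin (w (i + 1)) → ℝ)) :=
    fun _ => (0, fun _ => mid) with hθ₀_def
  have hθ₀S : ({θ₀} ×ˢ K) ⊆ S := by
    rintro ⟨θ, x⟩ ⟨hθ, hx⟩
    simp only [Set.mem_singleton_iff] at hθ
    subst hθ
    intro i
    have : preact (θ₀, x) i = mid := by
      simp [hpreact_def, hθ₀_def]
    rw [this]
    exact hmid
  obtain ⟨u, v, huo, hvo, hθ₀u, hKv, huv⟩ :=
    generalized_tube_lemma isCompact_singleton hKc hSopen hθ₀S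
  have hθ₀u' : θ₀ ∈ u := hθ₀u rfl
  obtain ⟨ε, hε, hball⟩ := Metric.isOpen_iff.1 huo θ₀ hθ₀u'
  have hPred_ball : ∀ θ ∈ Metric.ball θ₀ ε, Pred θ := by
    intro θ hθ x hx i
    have hmem : (θ, x) ∈ u ×ˢ v := Set.mk_mem_prod (hball hθ) (hKv hx)
    exact huv hmem i
  -- reduced parameter space and the embedding Φ
  set p₀ : (∀ i : Fin L, ((Fin (w (i + 1)) → Fin (w i) → ℝ) × (Fin (w (i + 1)) → ℝ))) ×
      (Fin (w L) → ℝ) := (θ₀, 0) with hp₀_def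
  set val : ((∀ i : Fin L, ((Fin (w (i + 1)) → Fin (w i) → ℝ) × (Fin (w (i + 1)) → ℝ))) ×
      (Fin (w L) → ℝ)) → ℝ := fun p => netFun σ w L (p.1, (p.2, 0)) x₀ with hval_def
  set Φ : ((∀ i : Fin L, ((Fin (w (i + 1)) → Fin (w i) → ℝ) × (Fin (w (i + 1)) → ℝ))) ×
      (Fin (w L) → ℝ)) → Params w L := fun p => (p.1, (p.2, c₀ - val p)) with hΦ_def
  set π : Params w L →
      ((∀ i : Fin L, ((Fin (w (i + 1)) → Fin (w i) → ℝ) × (Fin (w (i + 1)) → ℝ))) ×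
        (Fin (w L) → ℝ)) := fun α => (α.1, α.2.1) with hπ_def
  have hπlip : LipschitzWith 1 π := by
    have h1 : LipschitzWith 1 (fun α : Params w L => α.1) := LipschitzWith.prod_fst
    have h2 : LipschitzWith 1 (fun α : Params w L => α.2.1) := by
      have := (LipschitzWith.prod_fst (α := (Fin (w L) → ℝ)) (β := ℝ)).comp
        (LipschitzWith.prod_snd (α := (∀ i : Fin L,
          ((Fin (w (i + 1)) → Fin (w i) → ℝ) × (Fin (w (i + 1)) → ℝ)))))
      simpa [Function.comp_def] using this
    simpa [hπ_def, max_self] using h1.prodMk h2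
  refine ⟨Φ '' Metric.ball p₀ ε, ?_, ?_⟩
  · -- Hausdorff dimension bound
    have himg : π '' (Φ '' Metric.ball p₀ ε) = Metric.ball p₀ ε := by
      rw [Set.image_image]
      have : ∀ p, π (Φ p) = p := fun p => rfl
      simp only [this, Set.image_id']
    have hdim1 := hπlip.dimH_image_le (Φ '' Metric.ball p₀ ε)
    rw [himg] at hdim1
    have hdim2 : dimH (Metric.ball p₀ ε) =
        (Module.finrank ℝ
          ((∀ i : Fin L, ((Fin (w (i + 1)) → Fin (w i) → ℝ) × (Fin (w (i + 1)) → ℝ))) ×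
            (Fin (w L) → ℝ)) : ℝ≥0∞) :=
      Real.dimH_of_mem_nhds (Metric.ball_mem_nhds _ hε)
    have hrank : Module.finrank ℝ
        ((∀ i : Fin L, ((Fin (w (i + 1)) → Fin (w i) → ℝ) × (Fin (w (i + 1)) → ℝ))) ×
          (Fin (w L) → ℝ)) = (∑ i : Fin L, (w (i + 1) * w i + w (i + 1))) + w L := by
      simp [Module.finrank_prod, Module.finrank_pi_fintype,
        Module.finrank_fintype_fun_eq_card, Fintype.card_fin, Finset.sum_const, smul_eq_mul,
        Module.finrank_self, mul_comm]
    have hmdim : mdim w L - 1 = (∑ i : Fin L, (w (i + 1) * w i + w (i + 1))) + w L := by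
      have : (∑ i : Fin L, (w (i + 1) * w i + w (i + 1))) =
          ∑ i ∈ Finset.range L, w (i + 1) * (w i + 1) := by
        rw [Fin.sum_univ_eq_sum_range (fun i => w (i + 1) * w i + w (i + 1)) L]
        exact Finset.sum_congr rfl fun i _ => by ring
      rw [mdim, this]
      omega
    rw [hmdim, ← hrank, ← hdim2]
    exact hdim1
  · -- each element of E is a local minimum with optimal constant loss value
    rintro α ⟨p, hp, rfl⟩
    have hpball : p.1 ∈ Metric.ball θ₀ ε := by
      rw [Metric.mem_ball] at hp ⊢
      calc dist p.1 θ₀ = dist p.1 p₀.1 := rfl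
        _ ≤ dist p p₀ := by rw [Prod.dist_eq]; exact le_max_left _ _
        _ < ε := hp
    have hPp : Pred (Φ p).1 := hPred_ball p.1 hpball
    have hval_c₀ : netFun σ w L (Φ p) x₀ = c₀ := by
      show netFun σ w L (p.1, (p.2, c₀ - val p)) x₀ = c₀
      rw [netFun_bias, hval_def]
      ring
    have hPsiα : Psi σ w L hσ K (Φ p) = constCM K c₀ := by
      rw [hPsi_const (Φ p) hPp, hval_c₀]
    constructor
    · -- local minimality
      refine ⟨ε - dist p p₀, by simpa [sub_pos] using Metric.mem_ball.1 hp, ?_⟩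
      intro β hβ
      have hβball : β.1 ∈ Metric.ball θ₀ ε := by
        rw [Metric.mem_ball] at hβ ⊢
        calc dist β.1 θ₀ ≤ dist β.1 (Φ p).1 + dist (Φ p).1 θ₀ := dist_triangle _ _ _
          _ ≤ dist β (Φ p) + dist p p₀ := by
              refine add_le_add ?_ ?_
              · rw [Prod.dist_eq]; exact le_max_left _ _
              · show dist p.1 p₀.1 ≤ dist p p₀
                rw [Prod.dist_eq]; exact le_max_left _ _
          _ < (ε - dist p p₀) + dist p p₀ := by linarith
          _ = ε := by ring
      have hPβ : Pred β.1 := hPred_ball β.1 hβball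
      rw [hPsiα, hPsi_const β hPβ]
      exact hc₀ _
    · constructor
      · intro c
        rw [hPsiα]
        exact hc₀ c
      · exact ⟨c₀, by rw [hPsiα]⟩
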